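/- Let k ≥ 3 and let (P,Q,R) be a k-admissible triple. Then the graph H_n(P,Q,R) is F_k-free, i.e., contains no copy of the friendship graph F_k. -/

import Mathlib

open SimpleGraph

/-- The matching number of `G` restricted to a vertex subset `S`. -/
noncomputable def nuOn {V : Type*} (G : SimpleGraph V) (S : Set V) : ℕ :=
  sSup {n | ∃ M : G.Subgraph, M.IsMatching ∧ M.verts ⊆ S ∧ M.edgeSet.ncard = n}

/-- The matching number `ν(G)`. -/
noncomputable def nu {V : Type*} (G : SimpleGraph V) : ℕ := nuOn G Set.univ

/-- The friendship graph `F_k`: `k` triangles sharing the common center `none`. -/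
def friendshipGraph (k : ℕ) : SimpleGraph (Option (Fin k × Fin 2)) :=
  SimpleGraph.fromRel (fun a b => a = none ∨ b = none ∨ ∃ i, a = some (i, 0) ∧ b = some (i, 1))

/-- `G` contains no copy of the friendship graph `F_k`. -/
def FkFree (k : ℕ) {V : Type*} (G : SimpleGraph V) : Prop :=
  ∀ f : friendshipGraph k →g G, ¬ Function.Injective ⇑f

/-- The graph `H_n(P,Q,R)`: internal edges `E(P) ∪ E(Q)`, crossing edges
`((X×Y) \ (A×B)) ∪ E(R)`. -/
def Hconstr {V : Type*} (X Y A B : Set V) (P Q R : SimpleGraph V) : SimpleGraph V :=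
  SimpleGraph.fromRel (fun u v =>
    P.Adj u v ∨ Q.Adj u v ∨ R.Adj u v ∨ (u ∈ X ∧ v ∈ Y ∧ ¬(u ∈ A ∧ v ∈ B)))

lemma nuOn_ge {V ι : Type*} [Fintype V] [Fintype ι] (G : SimpleGraph V) (S : Set V)
    (x y : ι → V) (hadj : ∀ i, G.Adj (x i) (y i))
    (hxS : ∀ i, x i ∈ S) (hyS : ∀ i, y i ∈ S)
    (hxinj : Function.Injective x) (hyinj : Function.Injective y)
    (hxy : ∀ i j, x i ≠ y j) :
    Fintype.card ι ≤ nuOn G S := by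
  classical
  let M : G.Subgraph :=
    { verts := Set.range x ∪ Set.range y
      Adj := fun u v => ∃ i, (u = x i ∧ v = y i) ∨ (u = y i ∧ v = x i)
      adj_sub := by
        rintro u v ⟨i, (⟨rfl, rfl⟩ | ⟨rfl, rfl⟩)⟩
        · exact hadj i
        · exact (hadj i).symm
      edge_vert := by
        rintro u v ⟨i, (⟨rfl, rfl⟩ | ⟨rfl, rfl⟩)⟩
        · exact Or.inl ⟨i, rfl⟩
        · exact Or.inr ⟨i, rfl⟩
      symm := by
        constructor
        rintro u v ⟨i, (⟨rfl, rfl⟩ | ⟨rfl, rfl⟩)⟩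
        · exact ⟨i, Or.inr ⟨rfl, rfl⟩⟩
        · exact ⟨i, Or.inl ⟨rfl, rfl⟩⟩ }
  have hM : M.IsMatching := by
    rintro v (⟨i, rfl⟩ | ⟨i, rfl⟩)
    · refine ⟨y i, ⟨i, Or.inl ⟨rfl, rfl⟩⟩, ?_⟩
      rintro w ⟨j, (⟨hx, rfl⟩ | ⟨hx, rfl⟩)⟩
      · rw [hxinj hx]
      · exact absurd hx.symm (hxy i j).symm
    · refine ⟨x i, ⟨i, Or.inr ⟨rfl, rfl⟩⟩, ?_⟩
      rintro w ⟨j, (⟨hx, rfl⟩ | ⟨hx, rfl⟩)⟩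
      · exact absurd hx (hxy j i).symm
      · rw [hyinj hx]
  have hedge : M.edgeSet = Set.range (fun i => s(x i, y i)) := by
    ext e
    induction e with
    | _ u v =>
      simp only [Subgraph.mem_edgeSet, Set.mem_range]
      constructor
      · rintro ⟨i, (⟨rfl, rfl⟩ | ⟨rfl, rfl⟩)⟩
        · exact ⟨i, rfl⟩
        · exact ⟨i, Sym2.eq_swap⟩
      · rintro ⟨i, hi⟩
        rw [Sym2.eq_iff] at hi
        rcases hi with ⟨rfl, rfl⟩ | ⟨rfl, rfl⟩
        · exact ⟨i, Or.inl ⟨rfl, rfl⟩⟩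
        · exact ⟨i, Or.inr ⟨rfl, rfl⟩⟩
  have hcard : M.edgeSet.ncard = Fintype.card ι := by
    rw [hedge, ← Nat.card_coe_set_eq, Nat.card_range_of_injective, Nat.card_eq_fintype_card]
    intro i j hij
    rw [Sym2.eq_iff] at hij
    rcases hij with ⟨h1, _⟩ | ⟨h1, _⟩
    · exact hxinj h1
    · exact absurd h1 (hxy i j)
  have hverts : M.verts ⊆ S := by
    rintro v (⟨i, rfl⟩ | ⟨i, rfl⟩)
    · exact hxS i
    · exact hyS i
  have hbdd : BddAbove {n | ∃ M : G.Subgraph, M.IsMatching ∧ M.verts ⊆ S ∧ M.edgeSet.ncard = n} := by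
    refine ⟨(Set.univ : Set (Sym2 V)).ncard, ?_⟩
    rintro n ⟨N, _, _, rfl⟩
    exact Set.ncard_le_ncard (Set.subset_univ _) Set.finite_univ
  exact le_csSup hbdd ⟨M, hM, hverts, hcard⟩

lemma aux {V : Type*} [Fintype V] (k : ℕ) (hk : 1 ≤ k)
    (X Y A B : Set V) (P Q R : SimpleGraph V)
    (hpart : X ∪ Y = Set.univ) (hdisj : Disjoint X Y)
    (hAX : A ⊆ X) (hBY : B ⊆ Y)
    (hPA : ∀ u v, P.Adj u v → u ∈ A ∧ v ∈ A)
    (hQB : ∀ u v, Q.Adj u v → u ∈ B ∧ v ∈ B)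
    (hRbip : ∀ u v, R.Adj u v → (u ∈ A ∧ v ∈ B) ∨ (u ∈ B ∧ v ∈ A))
    (hQnu : nu Q ≤ k - 1)
    (hadmA : ∀ a ∈ A, (P.neighborSet a).ncard + nuOn Q (R.neighborSet a) ≤ k - 1)
    (f : friendshipGraph k →g Hconstr X Y A B P Q R) (hinj : Function.Injective ⇑f)
    (hcX : f none ∈ X) : False := by
  classical
  set c : V := f none with hc
  set x : Fin k → V := fun i => f (some (i, 0)) with hxdef
  set y : Fin k → V := fun i => f (some (i, 1)) with hydef
  have hmemXY : ∀ v : V, v ∈ X ∨ v ∈ Y := by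
    intro v
    have : v ∈ X ∪ Y := by rw [hpart]; trivial
    exact this
  have hXnY : ∀ u, u ∈ X → u ∉ Y := fun u hu hv => Set.disjoint_left.mp hdisj hu hv
  -- friendship graph adjacencies
  have hFcx : ∀ i : Fin k, (friendshipGraph k).Adj none (some (i, 0)) := by
    intro i
    rw [friendshipGraph, SimpleGraph.fromRel_adj]
    exact ⟨by simp, Or.inl (Or.inl rfl)⟩
  have hFcy : ∀ i : Fin k, (friendshipGraph k).Adj none (some (i, 1)) := by
    intro i
    rw [friendshipGraph, SimpleGraph.fromRel_adj]
    exact ⟨by simp, Or.inl (Or.inl rfl)⟩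
  have hFxy : ∀ i : Fin k, (friendshipGraph k).Adj (some (i, 0)) (some (i, 1)) := by
    intro i
    rw [friendshipGraph, SimpleGraph.fromRel_adj]
    refine ⟨by simp, Or.inl (Or.inr (Or.inr ⟨i, rfl, rfl⟩))⟩
  have hcx : ∀ i, (Hconstr X Y A B P Q R).Adj c (x i) := fun i => f.map_adj (hFcx i)
  have hcy : ∀ i, (Hconstr X Y A B P Q R).Adj c (y i) := fun i => f.map_adj (hFcy i)
  have hxyadj : ∀ i, (Hconstr X Y A B P Q R).Adj (x i) (y i) := fun i => f.map_adj (hFxy i)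
  have hxinj : Function.Injective x := by
    intro i j h
    have := hinj h
    simpa using this
  have hyinj : Function.Injective y := by
    intro i j h
    have := hinj h
    simpa using this
  have hxy : ∀ i j, x i ≠ y j := by
    intro i j h
    have := hinj h
    rw [Option.some.injEq, Prod.mk.injEq] at this
    exact absurd this.2 (by decide)
  -- adjacency characterizations
  have hXX : ∀ u v, (Hconstr X Y A B P Q R).Adj u v → u ∈ X → v ∈ X → P.Adj u v := by
    intro u v huv hu hv
    rw [Hconstr, SimpleGraph.fromRel_adj] at huv
    rcases huv with ⟨-, h | h⟩
    · rcases h with h | h | h | h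
      · exact h
      · exact absurd (hBY (hQB u v h).1) (hXnY u hu)
      · rcases hRbip u v h with ⟨-, hb⟩ | ⟨hb, -⟩
        · exact absurd (hBY hb) (hXnY v hv)
        · exact absurd (hBY hb) (hXnY u hu)
      · exact absurd h.2.1 (hXnY v hv)
    · rcases h with h | h | h | h
      · exact h.symm
      · exact absurd (hBY (hQB v u h).1) (hXnY v hv)
      · rcases hRbip v u h with ⟨-, hb⟩ | ⟨hb, -⟩
        · exact absurd (hBY hb) (hXnY u hu)
        · exact absurd (hBY hb) (hXnY v hv)
      · exact absurd h.2.1 (hXnY u hu)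
  have hYY : ∀ u v, (Hconstr X Y A B P Q R).Adj u v → u ∈ Y → v ∈ Y → Q.Adj u v := by
    intro u v huv hu hv
    have hXu : u ∉ X := fun h => hXnY u h hu
    have hXv : v ∉ X := fun h => hXnY v h hv
    rw [Hconstr, SimpleGraph.fromRel_adj] at huv
    rcases huv with ⟨-, h | h⟩
    · rcases h with h | h | h | h
      · exact absurd (hAX (hPA u v h).1) hXu
      · exact h
      · rcases hRbip u v h with ⟨ha, -⟩ | ⟨-, ha⟩
        · exact absurd (hAX ha) hXu
        · exact absurd (hAX ha) hXv
      · exact absurd h.1 hXu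
    · rcases h with h | h | h | h
      · exact absurd (hAX (hPA v u h).1) hXv
      · exact h.symm
      · rcases hRbip v u h with ⟨ha, -⟩ | ⟨-, ha⟩
        · exact absurd (hAX ha) hXv
        · exact absurd (hAX ha) hXu
      · exact absurd h.1 hXv
  have hAB : ∀ u v, (Hconstr X Y A B P Q R).Adj u v → u ∈ A → v ∈ B → R.Adj u v := by
    intro u v huv hu hv
    have hXu : u ∈ X := hAX hu
    have hYv : v ∈ Y := hBY hv
    rw [Hconstr, SimpleGraph.fromRel_adj] at huv
    rcases huv with ⟨-, h | h⟩
    · rcases h with h | h | h | h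
      · exact absurd (hAX (hPA u v h).2) (fun hx => hXnY v hx hYv)
      · exact absurd (hBY (hQB u v h).1) (hXnY u hXu)
      · exact h
      · exact absurd ⟨hu, hv⟩ h.2.2
    · rcases h with h | h | h | h
      · exact absurd (hAX (hPA v u h).1) (fun hx => hXnY v hx hYv)
      · exact absurd (hBY (hQB v u h).2) (hXnY u hXu)
      · exact h.symm
      · exact absurd h.1 (fun hx => hXnY v hx hYv)
  by_cases hcA : c ∈ A
  · -- center in A
    set p : Fin k → Prop := fun i => x i ∈ Y ∧ y i ∈ Y with hp
    have hT : ∀ i, p i → Q.Adj (x i) (y i) ∧ x i ∈ R.neighborSet c ∧ y i ∈ R.neighborSet c := by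
      intro i hi
      have hq := hYY _ _ (hxyadj i) hi.1 hi.2
      exact ⟨hq, hAB c (x i) (hcx i) hcA (hQB _ _ hq).1,
        hAB c (y i) (hcy i) hcA (hQB _ _ hq).2⟩
    have h1 : Fintype.card {i // p i} ≤ nuOn Q (R.neighborSet c) := by
      refine nuOn_ge Q _ (fun i : {i // p i} => x i.1) (fun i => y i.1)
        (fun i => (hT i.1 i.2).1) (fun i => (hT i.1 i.2).2.1) (fun i => (hT i.1 i.2).2.2)
        (fun i j h => Subtype.ext (hxinj h)) (fun i j h => Subtype.ext (hyinj h))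
        (fun i j => hxy i.1 j.1)
    have h2 : Fintype.card {i // ¬ p i} ≤ (P.neighborSet c).ncard := by
      have hz : ∀ i : {i // ¬ p i}, ∃ v ∈ P.neighborSet c, v = x i.1 ∨ v = y i.1 := by
        intro ⟨i, hi⟩
        by_cases hXxi : x i ∈ X
        · exact ⟨x i, hXX c (x i) (hcx i) hcX hXxi, Or.inl rfl⟩
        · have hxY : x i ∈ Y := (hmemXY (x i)).resolve_left hXxi
          have hyX : y i ∈ X := by
            rcases hmemXY (y i) with h' | h'
            · exact h'
            · exact absurd ⟨hxY, h'⟩ hi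
          exact ⟨y i, hXX c (y i) (hcy i) hcX hyX, Or.inr rfl⟩
      choose z hzmem hzval using hz
      have hzinj : Function.Injective z := by
        intro i j h
        rcases hzval i with h1' | h1' <;> rcases hzval j with h2' | h2'
        · exact Subtype.ext (hxinj (h1' ▸ h2' ▸ h))
        · exact absurd (h1' ▸ h2' ▸ h) (hxy i.1 j.1)
        · exact absurd (h1' ▸ h2' ▸ h).symm (hxy j.1 i.1)
        · exact Subtype.ext (hyinj (h1' ▸ h2' ▸ h))
      have : Fintype.card {i // ¬ p i} ≤ Nat.card (P.neighborSet c) := by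
        rw [← Nat.card_eq_fintype_card]
        exact Nat.card_le_card_of_injective
          (fun i : {i // ¬ p i} => (⟨z i, hzmem i⟩ : P.neighborSet c))
          (fun i j h => hzinj (congrArg Subtype.val h))
      rwa [Nat.card_coe_set_eq] at this
    have hsum : Fintype.card {i // p i} + Fintype.card {i // ¬ p i} = k := by
      have hle : Fintype.card {i : Fin k // p i} ≤ k := by
        simpa using Fintype.card_subtype_le p
      rw [Fintype.card_subtype_compl, Fintype.card_fin]
      omega
    have hadm := hadmA c hcA
    omega
  · -- center in X \ A
    have hallY : ∀ i, x i ∈ Y ∧ y i ∈ Y := by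
      intro i
      constructor
      · rcases hmemXY (x i) with h | h
        · exact absurd (hPA c (x i) (hXX _ _ (hcx i) hcX h)).1 hcA
        · exact h
      · rcases hmemXY (y i) with h | h
        · exact absurd (hPA c (y i) (hXX _ _ (hcy i) hcX h)).1 hcA
        · exact h
    have hQk : k ≤ nu Q := by
      have := nuOn_ge Q Set.univ x y
        (fun i => hYY _ _ (hxyadj i) (hallY i).1 (hallY i).2)
        (fun i => trivial) (fun i => trivial) hxinj hyinj hxy
      simpa [nu] using this
    omega

/-- If `(P,Q,R)` is a `k`-admissible triple, then `H_n(P,Q,R)` is `F_k`-free. -/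
theorem Hconstr_FkFree {V : Type*} [Fintype V] (k : ℕ) (hk : 3 ≤ k)
    (X Y A B : Set V) (P Q R : SimpleGraph V)
    (hpart : X ∪ Y = Set.univ) (hdisj : Disjoint X Y)
    (hbal : X.ncard ≤ Y.ncard + 1 ∧ Y.ncard ≤ X.ncard + 1)
    (hAX : A ⊆ X) (hBY : B ⊆ Y)
    (hPA : ∀ u v, P.Adj u v → u ∈ A ∧ v ∈ A)
    (hQB : ∀ u v, Q.Adj u v → u ∈ B ∧ v ∈ B)
    (hPiso : ∀ a ∈ A, ∃ u, P.Adj a u)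
    (hQiso : ∀ b ∈ B, ∃ u, Q.Adj b u)
    (hPnu : nu P ≤ k - 1) (hQnu : nu Q ≤ k - 1)
    (hPdeg : ∀ v, (P.neighborSet v).ncard ≤ k - 1)
    (hQdeg : ∀ v, (Q.neighborSet v).ncard ≤ k - 1)
    (hRbip : ∀ u v, R.Adj u v → (u ∈ A ∧ v ∈ B) ∨ (u ∈ B ∧ v ∈ A))
    (hadmA : ∀ a ∈ A, (P.neighborSet a).ncard + nuOn Q (R.neighborSet a) ≤ k - 1)
    (hadmB : ∀ b ∈ B, (Q.neighborSet b).ncard + nuOn P (R.neighborSet b) ≤ k - 1) :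
    FkFree k (Hconstr X Y A B P Q R) := by
  intro f hinj
  have hc : f none ∈ X ∪ Y := by rw [hpart]; trivial
  rcases hc with hcX | hcY
  · exact aux k (by omega) X Y A B P Q R hpart hdisj hAX hBY hPA hQB hRbip hQnu hadmA
      f hinj hcX
  · let g : Hconstr X Y A B P Q R →g Hconstr Y X B A Q P R := by
      refine ⟨id, ?_⟩
      intro a b h
      rw [Hconstr, SimpleGraph.fromRel_adj] at h ⊢
      tauto
    exact aux k (by omega) Y X B A Q P R (by rw [Set.union_comm]; exact hpart) hdisj.symm
      hBY hAX hQB hPA (fun u v h => (hRbip u v h).symm) hPnu hadmB (g.comp f)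
      (by exact hinj) (by exact hcY)
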